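/- If a finite-dimensional commutative Frobenius algebra (A, f) over a field of characteristic 0 decomposes as a direct product A = F × A' with F a field, then the Euler class e_{A,f} is not nilpotent. -/

import Mathlib

/-- If a finite-dimensional commutative Frobenius algebra over a field of
characteristic 0 decomposes as `A ≅ F × A'` with `F` a field, then its Euler class is
not nilpotent. -/
theorem euler_not_nilpotent_of_field_factor (K A F A' : Type) [Field K] [CharZero K]
    [CommRing A] [Algebra K A] [FiniteDimensional K A]
    [Field F] [Algebra K F] [CommRing A'] [Algebra K A']
    (φ : A ≃ₐ[K] F × A')
    (f : A →ₗ[K] K)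
    (hf : ∀ a : A, (∀ b : A, f (a * b) = 0) → a = 0)
    (ι : Type) [Fintype ι] [DecidableEq ι] (e : Module.Basis ι K A) (d : ι → A)
    (hd : ∀ i j, f (e i * d j) = if i = j then (1 : K) else 0) :
    ¬ IsNilpotent (∑ i, e i * d i) := by
  intro hnil
  set ε := ∑ i, e i * d i with hε
  -- key trace identity
  have key : ∀ a : A, f (a * ε) = LinearMap.trace K A (LinearMap.mulLeft K a) := by
    intro a
    rw [LinearMap.trace_eq_matrix_trace K e, Matrix.trace]
    have : ∀ i, f (a * (e i * d i)) = LinearMap.toMatrix e e (LinearMap.mulLeft K a) i i := by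
      intro i
      rw [LinearMap.toMatrix_apply, LinearMap.mulLeft_apply]
      conv_lhs => rw [← mul_assoc, ← Module.Basis.sum_repr e (a * e i)]
      rw [Finset.sum_mul, map_sum]
      rw [Finset.sum_eq_single i]
      · rw [smul_mul_assoc, map_smul, hd, if_pos rfl, smul_eq_mul, mul_one]
      · intro j _ hj
        rw [smul_mul_assoc, map_smul, hd, if_neg hj, smul_eq_mul, mul_zero]
      · intro h; exact absurd (Finset.mem_univ i) h
    rw [hε, Finset.mul_sum, map_sum]
    exact Finset.sum_congr rfl fun i _ => this i
  -- the idempotent p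
  set p := φ.symm (1, 0) with hp
  -- F is finite dimensional over K
  have hFfin : FiniteDimensional K F :=
    Module.Finite.of_surjective ((LinearMap.fst K F A').comp φ.toLinearMap)
      (fun x => ⟨φ.symm (x, 0), by simp⟩)
  -- trace of mul by p is finrank K F
  have hmul : LinearMap.mulLeft K p =
      (φ.toLinearEquiv.symm.conj (LinearMap.mulLeft K ((1 : F), (0 : A')))) := by
    ext x
    simp only [LinearEquiv.conj_apply, LinearMap.coe_comp, Function.comp_apply,
      LinearEquiv.coe_coe, LinearMap.mulLeft_apply, AlgEquiv.toLinearEquiv_apply,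
      AlgEquiv.toLinearEquiv_symm]
    apply φ.injective
    rw [map_mul, hp, AlgEquiv.apply_symm_apply]
    simp
  have hA'fin : FiniteDimensional K A' :=
    Module.Finite.of_surjective ((LinearMap.snd K F A').comp φ.toLinearMap)
      (fun x => ⟨φ.symm (0, x), by simp⟩)
  have hpr : LinearMap.mulLeft K ((1 : F), (0 : A')) =
      LinearMap.prodMap (LinearMap.id : F →ₗ[K] F) (0 : A' →ₗ[K] A') := by
    ext x <;> simp
  have htr : LinearMap.trace K A (LinearMap.mulLeft K p) = (Module.finrank K F : K) := by
    rw [hmul, LinearMap.trace_conj', hpr, LinearMap.trace_prodMap']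
    simp [LinearMap.trace_id]
  -- nilpotency forces the F-component of ε to vanish
  have h1 : (φ ε).1 = 0 := by
    have : IsNilpotent ((RingHom.fst F A').comp (φ : A →+* F × A') ε) :=
      hnil.map _
    simpa using this.eq_zero
  have hpe : p * ε = 0 := by
    apply φ.injective
    rw [map_mul, map_zero, hp, AlgEquiv.apply_symm_apply]
    ext
    · simp [h1]
    · simp
  have := key p
  rw [hpe, map_zero, htr] at this
  have hpos : 0 < Module.finrank K F := Module.finrank_pos
  exact (Nat.cast_ne_zero.mpr hpos.ne').symm this
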